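/- Rickman's Hunting Lemma: For every dimension d ≥ 1 there exists a constant D = D(d) > 0, depending only on d, with the following property. If μ is a Borel measure on ℝ^d that is absolutely continuous with respect to Lebesgue measure, is finite on every ball, and satisfies μ(ℝ^d) = ∞, then for every M > 0 there exist a point a ∈ ℝ^d and a radius r > 0 such that μ(B(a,r)) ≥ M and μ(B(a,r)) ≤ D · μ(B(a, r/2)). -/

import Mathlib

open MeasureTheory Metric
open scoped ENNReal

set_option maxHeartbeats 1000000

/-- **Rickman's Hunting Lemma.** For every dimension `d ≥ 1` there is a constant `D > 0`,
depending only on `d`, such that: if `μ` is a Borel measure on `ℝ^d` absolutely continuous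
with respect to Lebesgue measure, finite on every ball, and with `μ(ℝ^d) = ∞`, then for
every `M > 0` there are `a ∈ ℝ^d` and `r > 0` with `μ(B(a,r)) ≥ M` and
`μ(B(a,r)) ≤ D · μ(B(a,r/2))`. -/
theorem rickman_hunting_lemma (d : ℕ) (hd : 1 ≤ d) :
    ∃ D : ℝ, 0 < D ∧
      ∀ μ : Measure (EuclideanSpace ℝ (Fin d)),
        μ ≪ (volume : Measure (EuclideanSpace ℝ (Fin d))) →
        (∀ (a : EuclideanSpace ℝ (Fin d)) (r : ℝ), μ (ball a r) < ⊤) →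
        μ Set.univ = ⊤ →
        ∀ M : ℝ, 0 < M →
          ∃ (a : EuclideanSpace ℝ (Fin d)) (r : ℝ), 0 < r ∧
            ENNReal.ofReal M ≤ μ (ball a r) ∧
            μ (ball a r) ≤ ENNReal.ofReal D * μ (ball a (r / 2)) := by
  classical
  -- a finite covering of the closed unit ball by balls of radius 1/4
  obtain ⟨t, htmem, htcov⟩ :=
    (isCompact_closedBall (0 : EuclideanSpace ℝ (Fin d)) 1).elim_nhds_subcover
      (fun x => ball x (1 / 4)) (fun x _ => ball_mem_nhds x (by norm_num))
  have htne : t.Nonempty := by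
    have h0 := htcov (mem_closedBall_self zero_le_one)
    simp only [Set.mem_iUnion, exists_prop] at h0
    exact ⟨h0.choose, h0.choose_spec.1⟩
  set C : ℕ := t.card with hCdef
  have hC1 : 1 ≤ C := Finset.card_pos.mpr htne
  have hCR : (1 : ℝ) ≤ (C : ℝ) := by exact_mod_cast hC1
  have hC0' : ((C : ℕ) : ℝ≥0∞) ≠ 0 := by
    simp only [ne_eq, Nat.cast_eq_zero]
    omega
  have hCtop : ((C : ℕ) : ℝ≥0∞) ≠ ⊤ := ENNReal.natCast_ne_top C
  refine ⟨(C : ℝ) + 1, by positivity, ?_⟩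
  intro μ hac hfin hinf M hM
  by_contra hcon
  push_neg at hcon
  -- hcon : ∀ a r, 0 < r → ofReal M ≤ μ (ball a r) →
  --            ofReal ((C:ℝ)+1) * μ (ball a (r/2)) < μ (ball a r)
  have hDc : ENNReal.ofReal ((C : ℝ) + 1) = ((C : ℕ) : ℝ≥0∞) + 1 := by
    rw [ENNReal.ofReal_add (by positivity) zero_le_one, ENNReal.ofReal_natCast,
      ENNReal.ofReal_one]
  have hCM : ENNReal.ofReal ((C : ℝ) * M) = ((C : ℕ) : ℝ≥0∞) * ENNReal.ofReal M := by
    rw [ENNReal.ofReal_mul (by positivity), ENNReal.ofReal_natCast]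
  -- scaled covering of any ball
  have hcover : ∀ (a : EuclideanSpace ℝ (Fin d)) (r : ℝ), 0 < r →
      ball a r ⊆ ⋃ y ∈ t, ball (a + r • y) (r / 4) := by
    intro a r hr x hx
    have h1 : r⁻¹ • (x - a) ∈ closedBall (0 : EuclideanSpace ℝ (Fin d)) 1 := by
      rw [mem_closedBall_zero_iff, norm_smul, norm_inv, Real.norm_eq_abs, abs_of_pos hr]
      rw [mem_ball, dist_eq_norm] at hx
      rw [inv_mul_le_iff₀ hr]
      linarith
    have h2 := htcov h1
    simp only [Set.mem_iUnion, exists_prop] at h2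
    obtain ⟨y, hyt, hy⟩ := h2
    refine Set.mem_iUnion₂.mpr ⟨y, hyt, ?_⟩
    rw [mem_ball, dist_eq_norm] at hy ⊢
    have he : x - (a + r • y) = r • (r⁻¹ • (x - a) - y) := by
      rw [smul_sub, smul_smul, mul_inv_cancel₀ hr.ne', one_smul]
      abel
    rw [he, norm_smul, Real.norm_eq_abs, abs_of_pos hr]
    nlinarith [hy, norm_nonneg (r⁻¹ • (x - a) - y)]
  -- the key step: inside any ball of measure ≥ C·M there is a ball of half the
  -- radius whose measure is larger by a factor (C+1)/C
  have hstep : ∀ (a : EuclideanSpace ℝ (Fin d)) (r : ℝ), 0 < r →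
      ENNReal.ofReal ((C : ℝ) * M) ≤ μ (ball a r) →
      ∃ b : EuclideanSpace ℝ (Fin d), dist b a ≤ r ∧
        (((C : ℕ) : ℝ≥0∞) + 1) * μ (ball a r) ≤ ((C : ℕ) : ℝ≥0∞) * μ (ball b (r / 2)) := by
    intro a r hr hm
    have hsum : μ (ball a r) ≤ ∑ y ∈ t, μ (ball (a + r • y) (r / 4)) :=
      (measure_mono (hcover a r hr)).trans (measure_biUnion_finset_le t _)
    obtain ⟨y, hyt, hymax⟩ :=
      t.exists_max_image (fun y => μ (ball (a + r • y) (r / 4))) htne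
    have hym : μ (ball a r) ≤ ((C : ℕ) : ℝ≥0∞) * μ (ball (a + r • y) (r / 4)) := by
      refine hsum.trans ?_
      calc ∑ z ∈ t, μ (ball (a + r • z) (r / 4))
          ≤ t.card • μ (ball (a + r • y) (r / 4)) :=
            Finset.sum_le_card_nsmul t _ _ fun z hz => hymax z hz
        _ = ((C : ℕ) : ℝ≥0∞) * μ (ball (a + r • y) (r / 4)) := by rw [nsmul_eq_mul]
    refine ⟨a + r • y, ?_, ?_⟩
    · rw [dist_eq_norm, add_sub_cancel_left, norm_smul, Real.norm_eq_abs, abs_of_pos hr]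
      have hy1 : ‖y‖ ≤ 1 := mem_closedBall_zero_iff.mp (htmem y hyt)
      nlinarith
    · have hq : μ (ball (a + r • y) (r / 4)) ≤ μ (ball (a + r • y) (r / 2)) :=
        measure_mono (ball_subset_ball (by linarith))
      have hMball : ENNReal.ofReal M ≤ μ (ball (a + r • y) (r / 2)) := by
        have h3 : ((C : ℕ) : ℝ≥0∞) * ENNReal.ofReal M ≤
            ((C : ℕ) : ℝ≥0∞) * μ (ball (a + r • y) (r / 4)) := by
          rw [← hCM]; exact hm.trans hym
        exact ((ENNReal.mul_le_mul_iff_right hC0' hCtop).mp h3).trans hq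
      have hbad := hcon (a + r • y) (r / 2) (by linarith) hMball
      rw [hDc] at hbad
      have h4 : r / 2 / 2 = r / 4 := by ring
      rw [h4] at hbad
      calc (((C : ℕ) : ℝ≥0∞) + 1) * μ (ball a r)
          ≤ (((C : ℕ) : ℝ≥0∞) + 1) * (((C : ℕ) : ℝ≥0∞) * μ (ball (a + r • y) (r / 4))) :=
            mul_le_mul_right hym _
        _ = ((C : ℕ) : ℝ≥0∞) * ((((C : ℕ) : ℝ≥0∞) + 1) * μ (ball (a + r • y) (r / 4))) := by
            ring
        _ ≤ ((C : ℕ) : ℝ≥0∞) * μ (ball (a + r • y) (r / 2)) := mul_le_mul_right hbad.le _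
  -- an initial ball of measure ≥ C·M
  obtain ⟨n, hn⟩ : ∃ n : ℕ,
      ENNReal.ofReal ((C : ℝ) * M) ≤ μ (ball (0 : EuclideanSpace ℝ (Fin d)) (n : ℝ)) := by
    by_contra h
    push_neg at h
    have hmono : Monotone fun n : ℕ => ball (0 : EuclideanSpace ℝ (Fin d)) (n : ℝ) :=
      fun i j hij => ball_subset_ball (by exact_mod_cast hij)
    have hU : μ (⋃ n : ℕ, ball (0 : EuclideanSpace ℝ (Fin d)) (n : ℝ)) =
        ⨆ n : ℕ, μ (ball (0 : EuclideanSpace ℝ (Fin d)) (n : ℝ)) :=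
      hmono.measure_iUnion
    rw [Metric.iUnion_ball_nat, hinf] at hU
    have htop : (⊤ : ℝ≥0∞) ≤ ENNReal.ofReal ((C : ℝ) * M) :=
      hU ▸ iSup_le fun n => (h n).le
    exact ENNReal.ofReal_ne_top (top_le_iff.mp htop)
  set r₀ : ℝ := (n : ℝ) + 1 with hr₀def
  have hr₀ : 0 < r₀ := by positivity
  have hm₀ : ENNReal.ofReal ((C : ℝ) * M) ≤ μ (ball (0 : EuclideanSpace ℝ (Fin d)) r₀) :=
    hn.trans (measure_mono (ball_subset_ball (by simp [hr₀def])))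
  -- iterate the step
  choose g hg1 hg2 using hstep
  let S := {p : EuclideanSpace ℝ (Fin d) × ℝ //
    0 < p.2 ∧ ENNReal.ofReal ((C : ℝ) * M) ≤ μ (ball p.1 p.2)}
  let F : S → S := fun p =>
    ⟨(g p.1.1 p.1.2 p.2.1 p.2.2, p.1.2 / 2), half_pos p.2.1, by
      have h5 := hg2 p.1.1 p.1.2 p.2.1 p.2.2
      have h6 : ((C : ℕ) : ℝ≥0∞) * ENNReal.ofReal ((C : ℝ) * M) ≤
          ((C : ℕ) : ℝ≥0∞) * μ (ball (g p.1.1 p.1.2 p.2.1 p.2.2) (p.1.2 / 2)) := by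
        calc ((C : ℕ) : ℝ≥0∞) * ENNReal.ofReal ((C : ℝ) * M)
            ≤ ((C : ℕ) : ℝ≥0∞) * μ (ball p.1.1 p.1.2) := mul_le_mul_right p.2.2 _
          _ ≤ (((C : ℕ) : ℝ≥0∞) + 1) * μ (ball p.1.1 p.1.2) :=
              mul_le_mul_left le_self_add _
          _ ≤ _ := h5
      exact (ENNReal.mul_le_mul_iff_right hC0' hCtop).mp h6⟩
  have hF1 : ∀ p : S, (F p).1.2 = p.1.2 / 2 := fun p => rfl
  have hF2 : ∀ p : S, dist (F p).1.1 p.1.1 ≤ p.1.2 := fun p => hg1 p.1.1 p.1.2 p.2.1 p.2.2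
  have hF3 : ∀ p : S, (((C : ℕ) : ℝ≥0∞) + 1) * μ (ball p.1.1 p.1.2) ≤
      ((C : ℕ) : ℝ≥0∞) * μ (ball (F p).1.1 (F p).1.2) :=
    fun p => hg2 p.1.1 p.1.2 p.2.1 p.2.2
  let p₀ : S := ⟨((0 : EuclideanSpace ℝ (Fin d)), r₀), hr₀, hm₀⟩
  let seq : ℕ → S := fun k => F^[k] p₀
  have hseq : ∀ k, seq (k + 1) = F (seq k) := fun k => Function.iterate_succ_apply' F k _
  have hseq0 : seq 0 = p₀ := rfl
  -- radii
  have hrad : ∀ k, (seq k).1.2 = r₀ / 2 ^ k := by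
    intro k
    induction k with
    | zero => simp [hseq0, p₀]
    | succ k ih =>
      rw [hseq k, hF1, ih, pow_succ]
      ring
  -- centers stay in a bounded region
  have hdist0 : ∀ k,
      dist (seq k).1.1 (0 : EuclideanSpace ℝ (Fin d)) ≤ 2 * r₀ - 2 * r₀ / 2 ^ k := by
    intro k
    induction k with
    | zero => simp [hseq0, p₀]
    | succ k ih =>
      have h7 : dist (seq (k + 1)).1.1 (seq k).1.1 ≤ (seq k).1.2 := by
        rw [hseq k]; exact hF2 (seq k)
      calc dist (seq (k + 1)).1.1 (0 : EuclideanSpace ℝ (Fin d))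
          ≤ dist (seq (k + 1)).1.1 (seq k).1.1 +
            dist (seq k).1.1 (0 : EuclideanSpace ℝ (Fin d)) := dist_triangle _ _ _
        _ ≤ (seq k).1.2 + (2 * r₀ - 2 * r₀ / 2 ^ k) := add_le_add h7 ih
        _ = 2 * r₀ - 2 * r₀ / 2 ^ (k + 1) := by rw [hrad k, pow_succ]; ring
  -- all balls lie in ball 0 (4 r₀)
  have hT : ∀ k, μ (ball (seq k).1.1 (seq k).1.2) ≤
      μ (ball (0 : EuclideanSpace ℝ (Fin d)) (4 * r₀)) := by
    intro k
    refine measure_mono fun x hx => ?_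
    rw [mem_ball] at hx ⊢
    have h8 := hdist0 k
    have h9 : (1 : ℝ) ≤ 2 ^ k := one_le_pow₀ (by norm_num)
    have h10 : (seq k).1.2 ≤ r₀ := by
      rw [hrad k]
      exact div_le_self hr₀.le h9
    have h11 : 0 ≤ 2 * r₀ / 2 ^ k := by positivity
    calc dist x (0 : EuclideanSpace ℝ (Fin d))
        ≤ dist x (seq k).1.1 + dist (seq k).1.1 (0 : EuclideanSpace ℝ (Fin d)) :=
          dist_triangle _ _ _
      _ < (seq k).1.2 + (2 * r₀ - 2 * r₀ / 2 ^ k) := add_lt_add_of_lt_of_le hx h8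
      _ ≤ 4 * r₀ := by linarith
  -- measures grow geometrically
  have hgrow : ∀ k, (((C : ℕ) : ℝ≥0∞) + 1) ^ k * ENNReal.ofReal ((C : ℝ) * M) ≤
      ((C : ℕ) : ℝ≥0∞) ^ k * μ (ball (seq k).1.1 (seq k).1.2) := by
    intro k
    induction k with
    | zero => simpa [hseq0, p₀] using hm₀
    | succ k ih =>
      have h5 : (((C : ℕ) : ℝ≥0∞) + 1) * μ (ball (seq k).1.1 (seq k).1.2) ≤
          ((C : ℕ) : ℝ≥0∞) * μ (ball (seq (k + 1)).1.1 (seq (k + 1)).1.2) := by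
        rw [hseq k]; exact hF3 (seq k)
      calc (((C : ℕ) : ℝ≥0∞) + 1) ^ (k + 1) * ENNReal.ofReal ((C : ℝ) * M)
          = (((C : ℕ) : ℝ≥0∞) + 1) *
            ((((C : ℕ) : ℝ≥0∞) + 1) ^ k * ENNReal.ofReal ((C : ℝ) * M)) := by ring
        _ ≤ (((C : ℕ) : ℝ≥0∞) + 1) *
            (((C : ℕ) : ℝ≥0∞) ^ k * μ (ball (seq k).1.1 (seq k).1.2)) :=
            mul_le_mul_right ih _
        _ = ((C : ℕ) : ℝ≥0∞) ^ k *
            ((((C : ℕ) : ℝ≥0∞) + 1) * μ (ball (seq k).1.1 (seq k).1.2)) := by ring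
        _ ≤ ((C : ℕ) : ℝ≥0∞) ^ k *
            (((C : ℕ) : ℝ≥0∞) * μ (ball (seq (k + 1)).1.1 (seq (k + 1)).1.2)) :=
            mul_le_mul_right h5 _
        _ = ((C : ℕ) : ℝ≥0∞) ^ (k + 1) * μ (ball (seq (k + 1)).1.1 (seq (k + 1)).1.2) := by
            rw [pow_succ]; ring
  set T : ℝ≥0∞ := μ (ball (0 : EuclideanSpace ℝ (Fin d)) (4 * r₀)) with hTdef
  have hTtop : T ≠ ⊤ := (hfin 0 (4 * r₀)).ne
  have hfinal : ∀ k : ℕ, ((C : ℝ) + 1) ^ k * ((C : ℝ) * M) ≤ (C : ℝ) ^ k * T.toReal := by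
    intro k
    have h10 : (((C : ℕ) : ℝ≥0∞) + 1) ^ k * ENNReal.ofReal ((C : ℝ) * M) ≤
        ((C : ℕ) : ℝ≥0∞) ^ k * T := (hgrow k).trans (mul_le_mul_right (hT k) _)
    have h11 : (((C : ℕ) : ℝ≥0∞) + 1) ^ k = ENNReal.ofReal (((C : ℝ) + 1) ^ k) := by
      rw [ENNReal.ofReal_pow (by positivity), hDc]
    have h12 : ((C : ℕ) : ℝ≥0∞) ^ k = ENNReal.ofReal ((C : ℝ) ^ k) := by
      rw [ENNReal.ofReal_pow (by positivity), ENNReal.ofReal_natCast]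
    rw [h11, h12, ← ENNReal.ofReal_mul (by positivity)] at h10
    have h13 := ENNReal.toReal_mono (ENNReal.mul_ne_top ENNReal.ofReal_ne_top hTtop) h10
    rw [ENNReal.toReal_ofReal (by positivity), ENNReal.toReal_mul,
      ENNReal.toReal_ofReal (by positivity)] at h13
    exact h13
  -- conclude a contradiction in the reals
  obtain ⟨k, hk⟩ := exists_nat_gt (T.toReal / M)
  have hkM : T.toReal < (k : ℝ) * M := by
    rw [div_lt_iff₀ hM] at hk
    linarith
  have hc0 : (0 : ℝ) < (C : ℝ) := by linarith
  have hBern : 1 + (k : ℝ) * (1 / (C : ℝ)) ≤ (1 + 1 / (C : ℝ)) ^ k :=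
    one_add_mul_le_pow (le_trans (by norm_num : (-2 : ℝ) ≤ 0) (by positivity)) k
  have hpow : ((C : ℝ) + 1) ^ k = (C : ℝ) ^ k * (1 + 1 / (C : ℝ)) ^ k := by
    rw [← mul_pow]
    congr 1
    field_simp
  have h14 := hfinal k
  rw [hpow] at h14
  have h15 : (C : ℝ) ^ k * ((1 + (k : ℝ) * (1 / (C : ℝ))) * ((C : ℝ) * M)) ≤
      (C : ℝ) ^ k * T.toReal := by
    refine le_trans ?_ h14
    have he : (C : ℝ) ^ k * (1 + 1 / (C : ℝ)) ^ k * ((C : ℝ) * M) =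
        (C : ℝ) ^ k * ((1 + 1 / (C : ℝ)) ^ k * ((C : ℝ) * M)) := by ring
    rw [he]
    exact mul_le_mul_of_nonneg_left
      (mul_le_mul_of_nonneg_right hBern (by positivity)) (by positivity)
  have h16 : (1 + (k : ℝ) * (1 / (C : ℝ))) * ((C : ℝ) * M) ≤ T.toReal :=
    le_of_mul_le_mul_left h15 (pow_pos hc0 k)
  have h17 : (1 + (k : ℝ) * (1 / (C : ℝ))) * ((C : ℝ) * M) = (C : ℝ) * M + (k : ℝ) * M := by
    field_simp
  rw [h17] at h16
  nlinarith
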